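/- Assume condition (6) holds. Then the only normal elements of 𝔏_Λ are the scalar multiples of the identity: if A ∈ 𝔏_Λ satisfies A*A = AA*, then A = c·I for some c ∈ ℂ. -/

import Mathlib

noncomputable section

/-- Auxiliary recursion for the weight function: `W(u, []) = 1` and, reading the word
`w = i_k ⋯ i_1` as the list `[i_k, …, i_1]`,
`W(u, i :: w) = λ_{i, w·u} · W(u, w)`, so that
`W(u, i_k⋯i_1) = λ_{i_1,u} · λ_{i_2, i_1 u} ⋯ λ_{i_k, i_{k-1}⋯i_1 u}`. -/
def Waux {n : ℕ} (lam : Fin n → FreeMonoid (Fin n) → ℝ) (u : FreeMonoid (Fin n)) :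
    List (Fin n) → ℝ
  | [] => 1
  | i :: w => lam i (FreeMonoid.ofList w * u) * Waux lam u w

/-- The weight function `W : F_n^+ × F_n^+ → ℝ` associated to the weights `λ_{i,w}`. -/
def Wfun {n : ℕ} (lam : Fin n → FreeMonoid (Fin n) → ℝ) (u w : FreeMonoid (Fin n)) : ℝ :=
  Waux lam u (FreeMonoid.toList w)

instance {n : ℕ} : DecidableEq (FreeMonoid (Fin n)) := Classical.decEq _

/-- `n`-variable Fock space `H_n = ℓ²(F_n^+)`. -/
abbrev Hn (n : ℕ) : Type := lp (fun _ : FreeMonoid (Fin n) => ℂ) 2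

/-- The standard orthonormal basis vector `ξ_w` of `H_n`. -/
def xi {n : ℕ} (w : FreeMonoid (Fin n)) : Hn n := lp.single 2 w 1

/-- The unital WOT-closed algebra generated by a tuple of bounded operators on `H_n`:
the closure, in the weak operator topology, of the unital subalgebra they generate. -/
def wotAlg {n : ℕ} (T : Fin n → (Hn n →L[ℂ] Hn n)) : Set (Hn n →L[ℂ] Hn n) :=
  (ContinuousLinearMapWOT.ofCLM : (Hn n →L[ℂ] Hn n) → ContinuousLinearMapWOT (RingHom.id ℂ) (Hn n) (Hn n)) ⁻¹'
    (closure ((ContinuousLinearMapWOT.ofCLM : (Hn n →L[ℂ] Hn n) → ContinuousLinearMapWOT (RingHom.id ℂ) (Hn n) (Hn n)) ''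
      (Algebra.adjoin ℂ (Set.range T) : Subalgebra ℂ (Hn n →L[ℂ] Hn n))))

namespace NS

open FreeMonoid ContinuousLinearMap
open scoped ENNReal

local notation "⟪" x ", " y "⟫" => @inner ℂ _ _ x y

variable {n : ℕ} {lam : Fin n → FreeMonoid (Fin n) → ℝ}

lemma xi_apply_self (w : FreeMonoid (Fin n)) : (xi w) w = (1:ℂ) :=
  lp.single_apply_self _ _ _

lemma xi_apply_ne {w v : FreeMonoid (Fin n)} (h : v ≠ w) : (xi w) v = (0:ℂ) :=
  lp.single_apply_ne _ _ _ h

lemma inner_xi_left (w : FreeMonoid (Fin n)) (f : Hn n) : ⟪xi w, f⟫ = f w := by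
  simpa [xi, RCLike.inner_apply] using lp.inner_single_left (𝕜 := ℂ) w (1:ℂ) f

lemma eq_zero_of_forall_xi (D : Hn n →L[ℂ] Hn n) (h : ∀ w, D (xi w) = 0) : D = 0 := by
  have hadj : adjoint D = 0 := by
    ext y w
    have h1 : (adjoint D y) w = ⟪xi w, adjoint D y⟫ := (inner_xi_left w _).symm
    have h2 : ((0 : Hn n →L[ℂ] Hn n) y) w = 0 := rfl
    rw [h2, h1, ContinuousLinearMap.adjoint_inner_right, h w, inner_zero_left]
  calc D = adjoint (adjoint D) := (adjoint_adjoint D).symm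
  _ = 0 := by rw [hadj]; exact map_zero (adjoint : (Hn n →L[ℂ] Hn n) ≃ₗᵢ⋆[ℂ] _)

lemma eq_of_forall_xi {D E : Hn n →L[ℂ] Hn n} (h : ∀ w, D (xi w) = E (xi w)) : D = E := by
  have := eq_zero_of_forall_xi (D - E) (fun w => by
    simp [ContinuousLinearMap.sub_apply, h w])
  exact sub_eq_zero.mp this


lemma Waux_pos (hpos : ∀ i w, 0 < lam i w) (u : FreeMonoid (Fin n)) :
    ∀ l : List (Fin n), 0 < Waux lam u l
  | [] => one_pos
  | i :: l => mul_pos (hpos i _) (Waux_pos hpos u l)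

lemma Wfun_pos (hpos : ∀ i w, 0 < lam i w) (u w : FreeMonoid (Fin n)) :
    0 < Wfun lam u w := Waux_pos hpos u _

lemma Wfun_of_mul (u : FreeMonoid (Fin n)) (j : Fin n) (w : FreeMonoid (Fin n)) :
    Wfun lam u (FreeMonoid.of j * w) = lam j (w * u) * Wfun lam u w := by
  show Waux lam u (FreeMonoid.toList (FreeMonoid.of j * w)) = _
  rw [FreeMonoid.toList_of_mul]
  show lam j (FreeMonoid.ofList (FreeMonoid.toList w) * u) * Waux lam u (FreeMonoid.toList w) = _
  rw [FreeMonoid.ofList_toList]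
  rfl

/-- The weight of the right shift `R_i`. -/
def muW (lam : Fin n → FreeMonoid (Fin n) → ℝ) (i : Fin n) (w : FreeMonoid (Fin n)) : ℝ :=
  Wfun lam (FreeMonoid.of i) w * (Wfun lam 1 w)⁻¹

lemma muW_pos (hpos : ∀ i w, 0 < lam i w) (i : Fin n) (w : FreeMonoid (Fin n)) :
    0 < muW lam i w :=
  mul_pos (Wfun_pos hpos _ _) (inv_pos.mpr (Wfun_pos hpos _ _))

/-- Key commutation identity for the weights. -/
lemma muW_comm (hpos : ∀ i w, 0 < lam i w) (i j : Fin n) (w : FreeMonoid (Fin n)) :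
    muW lam i w * lam j (w * FreeMonoid.of i) = lam j w * muW lam i (FreeMonoid.of j * w) := by
  unfold muW
  rw [Wfun_of_mul, Wfun_of_mul, mul_one]
  have h1 := (Wfun_pos hpos (1 : FreeMonoid (Fin n)) w).ne'
  have h2 := (hpos j w).ne'
  field_simp

/-- drop the last letter of a word. -/
def pre (v : FreeMonoid (Fin n)) : FreeMonoid (Fin n) :=
  FreeMonoid.ofList (FreeMonoid.toList v).dropLast

/-- Coordinates of the weighted right shift `R_i` applied to `f`. -/
def rsCoord (lam : Fin n → FreeMonoid (Fin n) → ℝ) (i : Fin n)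
    (f : FreeMonoid (Fin n) → ℂ) (v : FreeMonoid (Fin n)) : ℂ :=
  if (FreeMonoid.toList v).getLast? = some i then (muW lam i (pre v) : ℂ) * f (pre v) else 0

lemma toList_mul_of (u : FreeMonoid (Fin n)) (i : Fin n) :
    FreeMonoid.toList (u * FreeMonoid.of i) = FreeMonoid.toList u ++ [i] := rfl

lemma pre_emb (u : FreeMonoid (Fin n)) (i : Fin n) : pre (u * FreeMonoid.of i) = u := by
  unfold pre
  rw [toList_mul_of, List.dropLast_concat, FreeMonoid.ofList_toList]

lemma rsCoord_emb (i : Fin n) (f : FreeMonoid (Fin n) → ℂ) (u : FreeMonoid (Fin n)) :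
    rsCoord lam i f (u * FreeMonoid.of i) = (muW lam i u : ℂ) * f u := by
  unfold rsCoord
  rw [toList_mul_of, List.getLast?_concat, if_pos rfl, pre_emb]

lemma rsCoord_cases (i : Fin n) (v : FreeMonoid (Fin n)) :
    (∀ f, rsCoord lam i f v = 0) ∨ v = pre v * FreeMonoid.of i := by
  by_cases h : (FreeMonoid.toList v).getLast? = some i
  · right
    obtain ⟨ys, hys⟩ := List.getLast?_eq_some_iff.mp h
    have hpre : pre v = FreeMonoid.ofList ys := by
      unfold pre; rw [hys, List.dropLast_concat]
    rw [hpre]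
    have : v = FreeMonoid.ofList (ys ++ [i]) := by
      rw [← hys, FreeMonoid.ofList_toList]
    rw [this]; rfl
  · left; intro f; unfold rsCoord; rw [if_neg h]

lemma emb_injective (i : Fin n) :
    Function.Injective (fun u : FreeMonoid (Fin n) => u * FreeMonoid.of i) := by
  intro a b h
  have h2 : FreeMonoid.toList a ++ [i] = FreeMonoid.toList b ++ [i] := congrArg FreeMonoid.toList h
  have h3 := (List.append_inj' h2 rfl).1
  rw [← FreeMonoid.ofList_toList a, ← FreeMonoid.ofList_toList b, h3]

lemma rsCoord_support {i : Fin n} {f : FreeMonoid (Fin n) → ℂ} {v : FreeMonoid (Fin n)}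
    (h : rsCoord lam i f v ≠ 0) :
    v ∈ Set.range (fun u : FreeMonoid (Fin n) => u * FreeMonoid.of i) := by
  rcases rsCoord_cases (lam := lam) i v with h0 | h0
  · exact absurd (h0 f) h
  · exact ⟨pre v, h0.symm⟩


lemma two_toReal : ((2 : ℝ≥0∞)).toReal = (2:ℝ) := by norm_num

lemma summable_sq (f : Hn n) : Summable (fun w : FreeMonoid (Fin n) => ‖f w‖ ^ (2:ℝ)) := by
  have := (lp.memℓp f).summable (show (0:ℝ) < ((2:ℝ≥0∞)).toReal by rw [two_toReal]; norm_num)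
  simpa [two_toReal] using this

lemma norm_rsCoord_comp (hpos : ∀ i w, 0 < lam i w) (i : Fin n) (f : FreeMonoid (Fin n) → ℂ)
    (u : FreeMonoid (Fin n)) :
    ‖rsCoord lam i f (u * FreeMonoid.of i)‖ = muW lam i u * ‖f u‖ := by
  rw [rsCoord_emb, norm_mul, Complex.norm_real,
    Real.norm_of_nonneg (muW_pos hpos i u).le]

section R

variable (hpos : ∀ i w, 0 < lam i w) {C : ℝ} (hC : ∀ i w, muW lam i w ≤ C)

include hpos hC in
lemma C_nonneg (i : Fin n) : 0 ≤ C :=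
  le_trans (muW_pos hpos i 1).le (hC i 1)

include hpos hC in
lemma rs_summable (i : Fin n) (f : Hn n) :
    Summable (fun v => ‖rsCoord lam i (⇑f) v‖ ^ (2:ℝ)) := by
  rw [← Function.Injective.summable_iff (emb_injective (n := n) i)]
  · apply Summable.of_nonneg_of_le (fun u => Real.rpow_nonneg (norm_nonneg _) _)
      (fun u => ?_) (((summable_sq f).mul_left (C ^ (2:ℝ))))
    show ‖rsCoord lam i (⇑f) (u * FreeMonoid.of i)‖ ^ (2:ℝ) ≤ _
    rw [norm_rsCoord_comp hpos]
    calc (muW lam i u * ‖f u‖) ^ (2:ℝ) ≤ (C * ‖f u‖) ^ (2:ℝ) := by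
          apply Real.rpow_le_rpow (mul_nonneg (muW_pos hpos i u).le (norm_nonneg _))
            (mul_le_mul_of_nonneg_right (hC i u) (norm_nonneg _)) (by norm_num)
      _ = C ^ (2:ℝ) * ‖f u‖ ^ (2:ℝ) :=
          Real.mul_rpow (C_nonneg hpos hC i) (norm_nonneg _)
  · intro v hv
    have : rsCoord lam i (⇑f) v = 0 := by
      by_contra hne
      exact hv (rsCoord_support hne)
    simp [this, Real.zero_rpow (two_ne_zero)]

include hpos hC in
lemma rs_memlp (i : Fin n) (f : Hn n) : Memℓp (rsCoord lam i (⇑f)) 2 := by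
  apply memℓp_gen
  rw [two_toReal]
  exact rs_summable hpos hC i f

/-- The weighted right shift as a linear map. -/
def RopL (hpos : ∀ i w, 0 < lam i w) (hC : ∀ i w, muW lam i w ≤ C) (i : Fin n) :
    Hn n →ₗ[ℂ] Hn n where
  toFun f := ⟨rsCoord lam i (⇑f), rs_memlp hpos hC i f⟩
  map_add' f g := by
    apply lp.ext
    funext v
    show rsCoord lam i (⇑(f + g)) v = rsCoord lam i (⇑f) v + rsCoord lam i (⇑g) v
    have : ⇑(f + g) = ⇑f + ⇑g := lp.coeFn_add f g
    rw [this]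
    unfold rsCoord
    split <;> simp <;> ring
  map_smul' c f := by
    apply lp.ext
    funext v
    show rsCoord lam i (⇑(c • f)) v = c * rsCoord lam i (⇑f) v
    have : ⇑(c • f) = c • ⇑f := lp.coeFn_smul c f
    rw [this]
    unfold rsCoord
    split <;> simp <;> ring

lemma RopL_norm (i : Fin n) (f : Hn n) :
    ‖RopL hpos hC i f‖ ≤ C * ‖f‖ := by
  apply lp.norm_le_of_tsum_le (by rw [two_toReal]; norm_num)
    (mul_nonneg (C_nonneg hpos hC i) (norm_nonneg f))
  rw [two_toReal]
  have hco : ∀ v, ‖(RopL hpos hC i f) v‖ = ‖rsCoord lam i (⇑f) v‖ := fun v => rfl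
  simp only [hco]
  have hsupp : ∀ v ∉ Set.range (fun u : FreeMonoid (Fin n) => u * FreeMonoid.of i),
      ‖rsCoord lam i (⇑f) v‖ ^ (2:ℝ) = 0 := by
    intro v hv
    have : rsCoord lam i (⇑f) v = 0 := by
      by_contra hne; exact hv (rsCoord_support hne)
    simp [this, Real.zero_rpow (two_ne_zero)]
  have h1 : ∑' v, ‖rsCoord lam i (⇑f) v‖ ^ (2:ℝ)
      = ∑' u, ‖rsCoord lam i (⇑f) (u * FreeMonoid.of i)‖ ^ (2:ℝ) := by
    refine (Function.Injective.tsum_eq (emb_injective i) ?_).symm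
    intro v hv
    have h0 : rsCoord lam i (⇑f) v ≠ 0 := by
      intro h
      apply Function.mem_support.mp hv
      simp [h, Real.zero_rpow (two_ne_zero)]
    exact rsCoord_support h0
  rw [h1]
  have h2 : ∑' u, ‖rsCoord lam i (⇑f) (u * FreeMonoid.of i)‖ ^ (2:ℝ)
      ≤ ∑' u, C ^ (2:ℝ) * ‖f u‖ ^ (2:ℝ) := by
    apply Summable.tsum_le_tsum _ _ ((summable_sq f).mul_left _)
    · intro u
      rw [norm_rsCoord_comp hpos]
      calc (muW lam i u * ‖f u‖) ^ (2:ℝ) ≤ (C * ‖f u‖) ^ (2:ℝ) := by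
            apply Real.rpow_le_rpow (mul_nonneg (muW_pos hpos i u).le (norm_nonneg _))
              (mul_le_mul_of_nonneg_right (hC i u) (norm_nonneg _)) (by norm_num)
        _ = C ^ (2:ℝ) * ‖f u‖ ^ (2:ℝ) :=
            Real.mul_rpow (C_nonneg hpos hC i) (norm_nonneg _)
    · have := rs_summable hpos hC i f
      rw [← Function.Injective.summable_iff (emb_injective (n := n) i)] at this
      · exact this
      · exact hsupp
  refine h2.trans ?_
  rw [tsum_mul_left]
  have h3 : ∑' u, ‖f u‖ ^ (2:ℝ) = ‖f‖ ^ (2:ℝ) := by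
    have := lp.norm_rpow_eq_tsum (p := (2:ℝ≥0∞)) (by norm_num) f
    rw [two_toReal] at this
    exact this.symm
  rw [h3, ← Real.mul_rpow (C_nonneg hpos hC i) (norm_nonneg f)]

/-- The weighted right shift `R_i` as a continuous linear map. -/
def Rop (hpos : ∀ i w, 0 < lam i w) (hC : ∀ i w, muW lam i w ≤ C) (i : Fin n) :
    Hn n →L[ℂ] Hn n :=
  LinearMap.mkContinuous (RopL hpos hC i) C (RopL_norm hpos hC i)

lemma Rop_apply (i : Fin n) (f : Hn n) (v : FreeMonoid (Fin n)) :
    (Rop hpos hC i f) v = rsCoord lam i (⇑f) v := by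
  rw [Rop, LinearMap.mkContinuous_apply]
  rfl

lemma Rop_xi (i : Fin n) (w : FreeMonoid (Fin n)) :
    Rop hpos hC i (xi w) = (muW lam i w : ℂ) • xi (w * FreeMonoid.of i) := by
  apply lp.ext
  funext v
  rw [Rop_apply]
  have hs : ⇑((muW lam i w : ℂ) • xi (w * FreeMonoid.of i) : Hn n)
      = (muW lam i w : ℂ) • ⇑(xi (w * FreeMonoid.of i)) := lp.coeFn_smul _ _
  rw [hs]
  by_cases hv : v = w * FreeMonoid.of i
  · subst hv
    rw [rsCoord_emb]
    simp [xi_apply_self, Pi.smul_apply, smul_eq_mul]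
  · have hR : rsCoord lam i (⇑(xi w)) v = 0 := by
      rcases rsCoord_cases (lam := lam) i v with h0 | h0
      · exact h0 _
      · have hval : rsCoord lam i (⇑(xi w)) v
            = (muW lam i (pre v) : ℂ) * (xi w) (pre v) := by
          conv_lhs => rw [h0]
          rw [rsCoord_emb]
        have hpw : pre v ≠ w := fun he => hv (by rw [h0, he])
        rw [hval, xi_apply_ne hpw, mul_zero]
    rw [hR, Pi.smul_apply, xi_apply_ne hv, smul_zero]


lemma comm_T_Rop (T : Fin n → (Hn n →L[ℂ] Hn n))
    (hT : ∀ i w, T i (xi w) = (lam i w : ℂ) • xi (FreeMonoid.of i * w))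
    (j i : Fin n) : T j * Rop hpos hC i = Rop hpos hC i * T j := by
  apply eq_of_forall_xi
  intro w
  show T j (Rop hpos hC i (xi w)) = Rop hpos hC i (T j (xi w))
  rw [Rop_xi, hT, map_smul, map_smul, hT, Rop_xi, smul_smul, smul_smul, ← mul_assoc]
  congr 1
  norm_cast
  exact muW_comm hpos i j w

lemma of_mul_ne_one (i : Fin n) (w : FreeMonoid (Fin n)) :
    FreeMonoid.of i * w ≠ 1 := by
  intro h
  have := congrArg FreeMonoid.toList h
  rw [FreeMonoid.toList_of_mul] at this
  exact List.cons_ne_nil i (FreeMonoid.toList w) this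

lemma adjoint_T_xi_one (T : Fin n → (Hn n →L[ℂ] Hn n))
    (hT : ∀ i w, T i (xi w) = (lam i w : ℂ) • xi (FreeMonoid.of i * w))
    (i : Fin n) : adjoint (T i) (xi (1 : FreeMonoid (Fin n))) = 0 := by
  apply lp.ext
  funext w
  show (adjoint (T i) (xi (1 : FreeMonoid (Fin n)))) w = (0 : ∀ _ : FreeMonoid (Fin n), ℂ) w
  rw [← inner_xi_left, ContinuousLinearMap.adjoint_inner_right, hT, inner_smul_left,
    inner_xi_left, xi_apply_ne (of_mul_ne_one i w), mul_zero]
  rfl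

lemma adjoin_vac (T : Fin n → (Hn n →L[ℂ] Hn n))
    (hT : ∀ i w, T i (xi w) = (lam i w : ℂ) • xi (FreeMonoid.of i * w))
    (B : Hn n →L[ℂ] Hn n) (hB : B ∈ Algebra.adjoin ℂ (Set.range T)) :
    ∃ d : ℂ, adjoint B (xi (1 : FreeMonoid (Fin n))) = d • xi (1 : FreeMonoid (Fin n)) := by
  induction hB using Algebra.adjoin_induction with
  | mem x hx =>
    obtain ⟨i, rfl⟩ := hx
    exact ⟨0, by rw [adjoint_T_xi_one T hT i, zero_smul]⟩
  | algebraMap r =>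
    refine ⟨starRingEnd ℂ r, ?_⟩
    have h1 : (algebraMap ℂ (Hn n →L[ℂ] Hn n) r) = r • 1 := by
      rw [Algebra.algebraMap_eq_smul_one]
    rw [h1, ← ContinuousLinearMap.star_eq_adjoint, star_smul, _root_.star_one]
    simp [RCLike.star_def]
  | add x y hx hy ihx ihy =>
    obtain ⟨dx, hdx⟩ := ihx
    obtain ⟨dy, hdy⟩ := ihy
    refine ⟨dx + dy, ?_⟩
    rw [map_add, ContinuousLinearMap.add_apply, hdx, hdy, add_smul]
  | mul x y hx hy ihx ihy =>
    obtain ⟨dx, hdx⟩ := ihx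
    obtain ⟨dy, hdy⟩ := ihy
    refine ⟨dx * dy, ?_⟩
    have : adjoint (x * y) = adjoint y * adjoint x := by
      rw [← ContinuousLinearMap.star_eq_adjoint, ← ContinuousLinearMap.star_eq_adjoint,
        ← ContinuousLinearMap.star_eq_adjoint, star_mul]
    rw [this, ContinuousLinearMap.mul_apply, hdx, map_smul, hdy, smul_smul, mul_comm]


lemma adjoin_comm_Rop (T : Fin n → (Hn n →L[ℂ] Hn n))
    (hT : ∀ i w, T i (xi w) = (lam i w : ℂ) • xi (FreeMonoid.of i * w))
    (B : Hn n →L[ℂ] Hn n) (hB : B ∈ Algebra.adjoin ℂ (Set.range T)) (i : Fin n) :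
    Rop hpos hC i * B = B * Rop hpos hC i := by
  have hle : Algebra.adjoin ℂ (Set.range T)
      ≤ Subalgebra.centralizer ℂ (Set.range (Rop hpos hC)) := by
    apply Algebra.adjoin_le
    rintro x ⟨j, rfl⟩
    show T j ∈ Subalgebra.centralizer ℂ (Set.range (Rop hpos hC))
    rw [Subalgebra.mem_centralizer_iff]
    rintro g ⟨i', rfl⟩
    exact (comm_T_Rop hpos hC T hT j i').symm
  have hmem := hle hB
  rw [Subalgebra.mem_centralizer_iff] at hmem
  exact hmem _ ⟨i, rfl⟩

end R

lemma wot_cont (x y : Hn n) :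
    Continuous fun B : ContinuousLinearMapWOT (RingHom.id ℂ) (Hn n) (Hn n) => (⟪y, B x⟫ : ℂ) :=
  ContinuousLinearMapWOT.continuous_dual_apply x (innerSL ℂ y)

end NS

set_option maxHeartbeats 1000000 in
open NS FreeMonoid ContinuousLinearMap in
/-- Assume condition (6) holds. Then the only normal elements of `𝔏_Λ`
are the scalar multiples of the identity. -/
theorem LLambda_normal_is_scalar (n : ℕ) (hn : 2 ≤ n)
    (lam : Fin n → FreeMonoid (Fin n) → ℝ)
    (hpos : ∀ i w, 0 < lam i w) (hbdd : ∃ C : ℝ, ∀ i w, lam i w ≤ C)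
    (h6 : ∃ C : ℝ, ∀ i w, Wfun lam (FreeMonoid.of i) w * (Wfun lam 1 w)⁻¹ ≤ C)
    (T : Fin n → (Hn n →L[ℂ] Hn n))
    (hT : ∀ i w, T i (xi w) = (lam i w : ℂ) • xi (FreeMonoid.of i * w))
    (A : Hn n →L[ℂ] Hn n) (hA : A ∈ wotAlg T)
    (hnormal : ContinuousLinearMap.adjoint A * A = A * ContinuousLinearMap.adjoint A) :
    ∃ c : ℂ, A = c • (1 : Hn n →L[ℂ] Hn n) := by
  classical
  obtain ⟨C, hC'⟩ := h6
  have hC : ∀ (i : Fin n) (w : FreeMonoid (Fin n)), muW lam i w ≤ C := hC'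
  set R : Fin n → (Hn n →L[ℂ] Hn n) := Rop hpos hC with hR
  -- the two WOT-closed sets of conditions
  set Z1 : Set (ContinuousLinearMapWOT (RingHom.id ℂ) (Hn n) (Hn n)) :=
    ⋂ (w : {w : FreeMonoid (Fin n) // w ≠ 1}),
      {B | (inner ℂ (xi (1 : FreeMonoid (Fin n))) (B (xi w.1)) : ℂ) = 0} with hZ1
  set Z2 : Set (ContinuousLinearMapWOT (RingHom.id ℂ) (Hn n) (Hn n)) :=
    ⋂ (i : Fin n) (x : Hn n) (y : Hn n),
      {B | (inner ℂ (adjoint (R i) y) (B x) : ℂ) = inner ℂ y (B (R i x))} with hZ2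
  have hZ1closed : IsClosed Z1 := by
    apply isClosed_iInter
    intro w
    exact isClosed_eq (wot_cont _ _) continuous_const
  have hZ2closed : IsClosed Z2 := by
    apply isClosed_iInter; intro i
    apply isClosed_iInter; intro x
    apply isClosed_iInter; intro y
    exact isClosed_eq (wot_cont _ _) (wot_cont _ _)
  -- the image of the adjoin lies in Z1 ∩ Z2
  have hsub : ((ContinuousLinearMapWOT.ofCLM : (Hn n →L[ℂ] Hn n) → ContinuousLinearMapWOT (RingHom.id ℂ) (Hn n) (Hn n))) ''
      (Algebra.adjoin ℂ (Set.range T) : Subalgebra ℂ (Hn n →L[ℂ] Hn n)) ⊆ Z1 ∩ Z2 := by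
    rintro _ ⟨B, hB, rfl⟩
    constructor
    · rw [hZ1]
      simp only [Set.mem_iInter]
      intro w
      show (inner ℂ (xi (1 : FreeMonoid (Fin n)))
        (((ContinuousLinearMapWOT.ofCLM : (Hn n →L[ℂ] Hn n) → ContinuousLinearMapWOT (RingHom.id ℂ) (Hn n) (Hn n)) B) (xi w.1)) : ℂ) = 0
      rw [ContinuousLinearMapWOT.ofCLM_apply]
      obtain ⟨d, hd⟩ := adjoin_vac T hT B hB
      have h1 : (inner ℂ (B (xi w.1)) (xi (1 : FreeMonoid (Fin n))) : ℂ) = 0 := by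
        rw [← ContinuousLinearMap.adjoint_inner_right, hd, inner_smul_right,
          inner_xi_left, xi_apply_ne w.2, mul_zero]
      rw [← inner_conj_symm, h1, map_zero]
    · rw [hZ2]
      simp only [Set.mem_iInter]
      intro i x y
      show (inner ℂ (adjoint (R i) y)
          (((ContinuousLinearMapWOT.ofCLM : (Hn n →L[ℂ] Hn n) → ContinuousLinearMapWOT (RingHom.id ℂ) (Hn n) (Hn n)) B) x) : ℂ)
        = inner ℂ y (((ContinuousLinearMapWOT.ofCLM : (Hn n →L[ℂ] Hn n) → ContinuousLinearMapWOT (RingHom.id ℂ) (Hn n) (Hn n)) B) (R i x))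
      rw [ContinuousLinearMapWOT.ofCLM_apply, ContinuousLinearMapWOT.ofCLM_apply]
      have hcomm := adjoin_comm_Rop hpos hC T hT B hB i
      rw [ContinuousLinearMap.adjoint_inner_left]
      have : R i (B x) = B (R i x) := by
        have := congrArg (fun o : Hn n →L[ℂ] Hn n => o x) hcomm
        exact this
      rw [this]
  -- transfer to A
  have hAZ : ((ContinuousLinearMapWOT.ofCLM : (Hn n →L[ℂ] Hn n) → ContinuousLinearMapWOT (RingHom.id ℂ) (Hn n) (Hn n))) A ∈ Z1 ∩ Z2 :=
    closure_minimal hsub (hZ1closed.inter hZ2closed) hA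
  have hA1 : ∀ w : FreeMonoid (Fin n), w ≠ 1 →
      (inner ℂ (xi (1 : FreeMonoid (Fin n))) (A (xi w)) : ℂ) = 0 := by
    intro w hw
    have := hAZ.1
    rw [hZ1] at this
    simp only [Set.mem_iInter] at this
    have h := this ⟨w, hw⟩
    simp only [Set.mem_setOf_eq] at h
    rwa [ContinuousLinearMapWOT.ofCLM_apply] at h
  have hA2 : ∀ (i : Fin n) (x : Hn n), A (R i x) = R i (A x) := by
    intro i x
    have h2 := hAZ.2
    rw [hZ2] at h2
    simp only [Set.mem_iInter] at h2
    apply ext_inner_left ℂ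
    intro y
    have h := h2 i x y
    simp only [Set.mem_setOf_eq] at h
    rw [ContinuousLinearMapWOT.ofCLM_apply, ContinuousLinearMapWOT.ofCLM_apply] at h
    rw [← h, ContinuousLinearMap.adjoint_inner_left]
  -- the adjoint of A fixes the vacuum up to scalar
  set g : Hn n := adjoint A (xi (1 : FreeMonoid (Fin n))) with hg
  have hgcoord : ∀ w : FreeMonoid (Fin n), w ≠ 1 → g w = 0 := by
    intro w hw
    have h1 : g w = inner ℂ (xi w) g := (inner_xi_left w g).symm
    rw [h1, hg, ContinuousLinearMap.adjoint_inner_right, ← inner_conj_symm, hA1 w hw, map_zero]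
  set d : ℂ := g 1 with hd
  have hgd : g = d • xi (1 : FreeMonoid (Fin n)) := by
    apply lp.ext
    funext v
    have hs : ⇑(d • xi (1 : FreeMonoid (Fin n)) : Hn n)
        = d • ⇑(xi (1 : FreeMonoid (Fin n))) := lp.coeFn_smul _ _
    rw [hs]
    by_cases hv : v = 1
    · subst hv
      simp [xi_apply_self, hd]
    · rw [hgcoord v hv, Pi.smul_apply, xi_apply_ne hv, smul_zero]
  -- inner product computations at the vacuum
  have hxi11 : (inner ℂ (xi (1 : FreeMonoid (Fin n))) (xi (1 : FreeMonoid (Fin n))) : ℂ) = 1 := by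
    rw [inner_xi_left, xi_apply_self]
  have hu1 : (inner ℂ (A (xi (1 : FreeMonoid (Fin n)))) (xi (1 : FreeMonoid (Fin n))) : ℂ) = d := by
    rw [← ContinuousLinearMap.adjoint_inner_right, ← hg, hgd, inner_smul_right, hxi11, mul_one]
  have h1u : (inner ℂ (xi (1 : FreeMonoid (Fin n))) (A (xi (1 : FreeMonoid (Fin n)))) : ℂ)
      = starRingEnd ℂ d := by
    rw [← inner_conj_symm, hu1]
  have huu : (inner ℂ (A (xi (1 : FreeMonoid (Fin n)))) (A (xi (1 : FreeMonoid (Fin n)))) : ℂ)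
      = d * starRingEnd ℂ d := by
    have e1 : (inner ℂ (A (xi (1 : FreeMonoid (Fin n)))) (A (xi (1 : FreeMonoid (Fin n)))) : ℂ)
        = inner ℂ (xi (1 : FreeMonoid (Fin n)))
            ((adjoint A * A) (xi (1 : FreeMonoid (Fin n)))) := by
      rw [ContinuousLinearMap.mul_apply, ContinuousLinearMap.adjoint_inner_right]
    rw [e1, hnormal, ContinuousLinearMap.mul_apply, ← hg, hgd, map_smul, inner_smul_right, h1u]
  set c : ℂ := starRingEnd ℂ d with hc
  have hvac : A (xi (1 : FreeMonoid (Fin n))) = c • xi (1 : FreeMonoid (Fin n)) := by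
    have hz : (inner ℂ (A (xi (1 : FreeMonoid (Fin n))) - c • xi (1 : FreeMonoid (Fin n)))
        (A (xi (1 : FreeMonoid (Fin n))) - c • xi (1 : FreeMonoid (Fin n))) : ℂ) = 0 := by
      rw [inner_sub_left, inner_sub_right, inner_sub_right, inner_smul_left, inner_smul_right,
        inner_smul_left, inner_smul_right, huu, hu1, h1u, hxi11, hc]
      simp only [Complex.conj_conj]
      ring
    have := inner_self_eq_zero.mp hz
    exact sub_eq_zero.mp this
  -- propagate to all basis vectors using the right shifts
  have hall : ∀ l : List (Fin n),
      A (xi (FreeMonoid.ofList l)) = c • xi (FreeMonoid.ofList l) := by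
    intro l
    induction l using List.reverseRecOn with
    | nil => exact hvac
    | append_singleton l i ih =>
      have hmu : ((muW lam i (FreeMonoid.ofList l) : ℝ) : ℂ) ≠ 0 := by
        exact_mod_cast (muW_pos hpos i (FreeMonoid.ofList l)).ne'
      have hstep : R i (xi (FreeMonoid.ofList l))
          = (muW lam i (FreeMonoid.ofList l) : ℂ) • xi (FreeMonoid.ofList l * FreeMonoid.of i) :=
        Rop_xi hpos hC i (FreeMonoid.ofList l)
      have hofl : FreeMonoid.ofList (l ++ [i]) = FreeMonoid.ofList l * FreeMonoid.of i := rfl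
      have h1 : xi (FreeMonoid.ofList l * FreeMonoid.of i)
          = ((muW lam i (FreeMonoid.ofList l) : ℂ))⁻¹ • R i (xi (FreeMonoid.ofList l)) := by
        rw [hstep, smul_smul, inv_mul_cancel₀ hmu, one_smul]
      calc A (xi (FreeMonoid.ofList (l ++ [i])))
          = A (((muW lam i (FreeMonoid.ofList l) : ℂ))⁻¹ • R i (xi (FreeMonoid.ofList l))) := by
            rw [hofl, h1]
        _ = ((muW lam i (FreeMonoid.ofList l) : ℂ))⁻¹ • R i (A (xi (FreeMonoid.ofList l))) := by
            rw [map_smul, hA2]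
        _ = ((muW lam i (FreeMonoid.ofList l) : ℂ))⁻¹ • R i (c • xi (FreeMonoid.ofList l)) := by
            rw [ih]
        _ = c • (((muW lam i (FreeMonoid.ofList l) : ℂ))⁻¹
              • ((muW lam i (FreeMonoid.ofList l) : ℂ)
                • xi (FreeMonoid.ofList l * FreeMonoid.of i))) := by
            rw [map_smul, hstep, smul_smul, smul_smul, smul_smul, smul_smul]
            congr 1
            ring
        _ = c • xi (FreeMonoid.ofList (l ++ [i])) := by
            rw [smul_smul, smul_smul, mul_assoc, inv_mul_cancel₀ hmu, mul_one, hofl]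
  have hallw : ∀ w : FreeMonoid (Fin n), A (xi w) = c • xi w := by
    intro w
    have := hall (FreeMonoid.toList w)
    rwa [FreeMonoid.ofList_toList] at this
  refine ⟨c, ?_⟩
  apply eq_of_forall_xi
  intro w
  rw [hallw w]
  simp
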